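/- Let ν^{(α)} be an α-stable Lévy measure on ℝ^d of the form ν^{(α)}(Γ) = ∫₀^∞ ∫_{S^{d−1}} 1_Γ(rθ) Σ(dθ) r^{-(1+α)} dr with α ∈ (0,2) and Σ a finite measure on the unit sphere. Suppose ν is a measure on ℝ^d with ν ≥ ν^{(α)}, and σ is an invertible d×d real matrix. Then for all ξ ∈ ℝ^d, ∫_{ℝ^d} (1 − cos(ξ·σy)) ν(dy) ≥ c_α · (inf_{|θ|=1} |σ*θ|^α) · (inf_{|θ₀|=1} ∫_{S^{d−1}} |θ₀·θ|^α Σ(dθ)) · |ξ|^α, where c_α = ∫₀^∞ (1−cos r) r^{-(1+α)} dr ∈ (0,∞). -/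

import Mathlib

open MeasureTheory Real Set RealInnerProductSpace
open scoped ENNReal NNReal

section AuxStmt8

lemma lemA {α : ℝ} (hα : α ∈ Set.Ioo (0:ℝ) 2) :
    IntegrableOn (fun r => (1 - Real.cos r) / r ^ (1 + α)) (Set.Ioi (0:ℝ)) := by
  obtain ⟨hα0, hα2⟩ := hα
  have hcont : ContinuousOn (fun r : ℝ => (1 - Real.cos r) / r ^ (1 + α)) (Set.Ioi 0) := by
    apply ContinuousOn.div
    · fun_prop
    · exact (continuousOn_id.rpow_const (fun x hx => Or.inl (ne_of_gt hx)))
    · intro x hx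
      exact (Real.rpow_pos_of_pos hx _).ne'
  have h1 : IntegrableOn (fun r => (1 - Real.cos r) / r ^ (1 + α)) (Set.Ioo (0:ℝ) 1) := by
    have hmaj : IntegrableOn (fun r : ℝ => r ^ (1 - α) / 2) (Set.Ioo (0:ℝ) 1) := by
      exact (((intervalIntegral.integrableOn_Ioo_rpow_iff one_pos).2 (by linarith)).div_const 2)
    apply Integrable.mono' hmaj
      ((hcont.mono Ioo_subset_Ioi_self).aestronglyMeasurable measurableSet_Ioo)
    filter_upwards [ae_restrict_mem measurableSet_Ioo] with r hr
    have hr0 : 0 < r := hr.1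
    have hcos : 1 - Real.cos r ≤ r ^ 2 / 2 := by
      nlinarith [Real.one_sub_sq_div_two_le_cos (x := r)]
    have hub : (1 - Real.cos r) / r ^ (1 + α) ≤ r ^ (1 - α) / 2 := by
      rw [div_le_iff₀ (Real.rpow_pos_of_pos hr0 _)]
      have : r ^ (1 - α) / 2 * r ^ (1 + α) = r ^ (2:ℝ) / 2 := by
        rw [div_mul_eq_mul_div, ← Real.rpow_add hr0]; norm_num
      rw [this]
      calc 1 - Real.cos r ≤ r ^ 2 / 2 := hcos
        _ = r ^ (2:ℝ) / 2 := by
              rw [show ((2:ℝ)) = ((2:ℕ):ℝ) by norm_num, Real.rpow_natCast]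
    have hnn : 0 ≤ (1 - Real.cos r) / r ^ (1 + α) :=
      div_nonneg (by nlinarith [Real.cos_le_one r]) (Real.rpow_pos_of_pos hr0 _).le
    rw [Real.norm_eq_abs, abs_of_nonneg hnn]
    exact hub
  have h2 : IntegrableOn (fun r => (1 - Real.cos r) / r ^ (1 + α)) (Set.Ici (1:ℝ)) := by
    have hmaj : IntegrableOn (fun r : ℝ => 2 * r ^ (-(1 + α))) (Set.Ici (1:ℝ)) := by
      rw [integrableOn_Ici_iff_integrableOn_Ioi]
      exact ((integrableOn_Ioi_rpow_iff one_pos).2 (by linarith)).const_mul 2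
    apply Integrable.mono' hmaj
      ((hcont.mono (Set.Ici_subset_Ioi.2 one_pos)).aestronglyMeasurable measurableSet_Ici)
    filter_upwards [ae_restrict_mem measurableSet_Ici] with r hr
    have hr0 : (0:ℝ) < r := lt_of_lt_of_le one_pos hr
    have hnn : 0 ≤ (1 - Real.cos r) / r ^ (1 + α) :=
      div_nonneg (by nlinarith [Real.cos_le_one r]) (Real.rpow_pos_of_pos hr0 _).le
    rw [Real.norm_eq_abs, abs_of_nonneg hnn, div_le_iff₀ (Real.rpow_pos_of_pos hr0 _),
      mul_assoc, ← Real.rpow_add hr0]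
    simp only [neg_add_cancel, Real.rpow_zero, mul_one]
    nlinarith [Real.neg_one_le_cos r]
  have : Set.Ioi (0:ℝ) ⊆ Set.Ioo 0 1 ∪ Set.Ici 1 := by
    intro x hx
    rcases lt_or_ge x 1 with h | h
    · exact Or.inl ⟨hx, h⟩
    · exact Or.inr h
  exact (h1.union h2).mono_set this

lemma lemB {α : ℝ} (hα : α ∈ Set.Ioo (0:ℝ) 2) :
    0 < ∫ r in Set.Ioi (0:ℝ), (1 - Real.cos r) / r ^ (1 + α) := by
  rw [setIntegral_pos_iff_support_of_nonneg_ae]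
  · have hsub : Set.Ioo (0:ℝ) π ⊆
        Function.support (fun r => (1 - Real.cos r) / r ^ (1 + α)) ∩ Set.Ioi 0 := by
      intro r hr
      refine ⟨?_, hr.1⟩
      have hcos : Real.cos r < 1 := by
        have := Real.cos_lt_cos_of_nonneg_of_le_pi (le_refl 0) hr.2.le hr.1
        simpa using this
      exact (div_pos (by linarith) (Real.rpow_pos_of_pos hr.1 _)).ne'
    calc (0:ℝ≥0∞) < volume (Set.Ioo (0:ℝ) π) := by
          simp [Real.volume_Ioo, Real.pi_pos]
      _ ≤ _ := measure_mono hsub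
  · filter_upwards [ae_restrict_mem measurableSet_Ioi] with r hr
    exact div_nonneg (by nlinarith [Real.cos_le_one r]) (Real.rpow_pos_of_pos hr _).le
  · exact lemA hα

lemma lemC0 {α : ℝ} (hα : α ∈ Set.Ioo (0:ℝ) 2) :
    ∫⁻ r in Set.Ioi (0:ℝ), ENNReal.ofReal (1 - Real.cos r) * ENNReal.ofReal (r ^ (-(1+α)))
      = ENNReal.ofReal (∫ r in Set.Ioi (0:ℝ), (1 - Real.cos r) / r ^ (1+α)) := by
  rw [ofReal_integral_eq_lintegral_ofReal (lemA hα)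
    (by filter_upwards [ae_restrict_mem measurableSet_Ioi] with r hr
        exact div_nonneg (by nlinarith [Real.cos_le_one r]) (Real.rpow_pos_of_pos hr _).le)]
  refine setLIntegral_congr_fun measurableSet_Ioi (fun r hr => ?_)
  rw [Real.rpow_neg (le_of_lt hr), div_eq_mul_inv,
    ENNReal.ofReal_mul (by nlinarith [Real.cos_le_one r])]

lemma lemC {α : ℝ} (hα : α ∈ Set.Ioo (0:ℝ) 2) (t : ℝ) :
    ∫⁻ r in Set.Ioi (0:ℝ), ENNReal.ofReal (1 - Real.cos (t * r)) * ENNReal.ofReal (r ^ (-(1+α)))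
      = ENNReal.ofReal (∫ r in Set.Ioi (0:ℝ), (1 - Real.cos r) / r ^ (1+α)) *
          ENNReal.ofReal (|t| ^ α) := by
  rcases eq_or_ne t 0 with rfl | ht
  · simp [Real.zero_rpow (ne_of_gt hα.1)]
  · set c := |t| with hc
    have hc0 : 0 < c := abs_pos.2 ht
    have hF : ∀ r ∈ Set.Ioi (0:ℝ),
        ENNReal.ofReal (1 - Real.cos (t * r)) * ENNReal.ofReal (r ^ (-(1+α)))
          = ENNReal.ofReal (1 - Real.cos (c * r)) * ENNReal.ofReal (r ^ (-(1+α))) := by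
      intro r hr
      have : Real.cos (t * r) = Real.cos (c * r) := by
        rw [← Real.cos_abs (t * r), abs_mul, abs_of_pos (show (0:ℝ) < r from hr)]
      rw [this]
    rw [setLIntegral_congr_fun measurableSet_Ioi hF]
    set F : ℝ → ℝ≥0∞ := fun r =>
      ENNReal.ofReal (1 - Real.cos (c * r)) * ENNReal.ofReal (r ^ (-(1+α))) with hFdef
    have hmeasF : Measurable F := by rw [hFdef]; fun_prop
    have hpre : (fun u : ℝ => c * u) ⁻¹' (Set.Ioi 0) = Set.Ioi (0:ℝ) := by
      ext x; simp [Set.mem_Ioi, mul_pos_iff_of_pos_left hc0]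
    have hmapeq : Measure.map (fun u : ℝ => c * u) (volume.restrict (Set.Ioi 0))
        = (ENNReal.ofReal c⁻¹) • (volume.restrict (Set.Ioi (0:ℝ))) := by
      conv_lhs => rw [← hpre]
      rw [← Measure.restrict_map (measurable_const_mul c) measurableSet_Ioi,
        Real.map_volume_mul_left (ne_of_gt hc0), Measure.restrict_smul,
        abs_of_pos (inv_pos.2 hc0)]
    have key : ∫⁻ u, F (c⁻¹ * u) ∂(Measure.map (fun u : ℝ => c * u) (volume.restrict (Set.Ioi 0)))
        = ∫⁻ r in Set.Ioi (0:ℝ), F r := by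
      rw [lintegral_map (show Measurable fun u : ℝ => F (c⁻¹ * u) by fun_prop)
        (measurable_const_mul c)]
      refine lintegral_congr fun r => ?_
      congr 1
      field_simp
    rw [← key, hmapeq, lintegral_smul_measure]
    have hinner : ∀ u ∈ Set.Ioi (0:ℝ), F (c⁻¹ * u)
        = ENNReal.ofReal (c ^ (1+α)) *
            (ENNReal.ofReal (1 - Real.cos u) * ENNReal.ofReal (u ^ (-(1+α)))) := by
      intro u hu
      have hu0 : (0:ℝ) < u := hu
      have h1 : c * (c⁻¹ * u) = u := by field_simp
      have h2 : (c⁻¹ * u) ^ (-(1+α)) = c ^ (1+α) * u ^ (-(1+α)) := by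
        rw [Real.mul_rpow (inv_nonneg.2 hc0.le) hu0.le, Real.inv_rpow hc0.le,
          Real.rpow_neg hc0.le, inv_inv]
      rw [hFdef]
      simp only [h1, h2]
      rw [ENNReal.ofReal_mul (Real.rpow_nonneg hc0.le _)]
      ring
    rw [setLIntegral_congr_fun measurableSet_Ioi hinner,
      lintegral_const_mul _ (by fun_prop), lemC0 hα, smul_eq_mul, ← mul_assoc]
    rw [← ENNReal.ofReal_mul (inv_nonneg.2 hc0.le)]
    have : c⁻¹ * c ^ (1+α) = c ^ α := by
      rw [← Real.rpow_neg_one c, ← Real.rpow_add hc0]; norm_num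
    rw [this, mul_comm]

lemma lemD {d : ℕ} {α : ℝ} (S : Measure (EuclideanSpace ℝ (Fin d))) [IsFiniteMeasure S]
    (να : Measure (EuclideanSpace ℝ (Fin d)))
    (hνα : ∀ Γ : Set (EuclideanSpace ℝ (Fin d)), MeasurableSet Γ →
      να Γ = ∫⁻ r in Set.Ioi (0:ℝ),
        (∫⁻ θ, Γ.indicator (fun _ => (1:ℝ≥0∞)) (r • θ) ∂S) * ENNReal.ofReal (r ^ (-(1+α))))
    (f : EuclideanSpace ℝ (Fin d) → ℝ≥0∞) (hf : Measurable f) :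
    ∫⁻ y, f y ∂να
      = ∫⁻ θ, (∫⁻ r in Set.Ioi (0:ℝ), f (r • θ) * ENNReal.ofReal (r ^ (-(1+α)))) ∂S := by
  set w : ℝ → ℝ≥0∞ := fun r => ENNReal.ofReal (r ^ (-(1+α))) with hw
  have hwmeas : Measurable w := by fun_prop
  set μ₀ : Measure ℝ := (volume.restrict (Set.Ioi 0)).withDensity w with hμ₀
  have hsmul : Measurable (fun p : ℝ × EuclideanSpace ℝ (Fin d) => p.1 • p.2) := continuous_smul.measurable
  have hμeq : να = Measure.map (fun p : ℝ × EuclideanSpace ℝ (Fin d) => p.1 • p.2) (μ₀.prod S) := by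
    ext Γ hΓ
    rw [Measure.map_apply hsmul hΓ, Measure.prod_apply (hsmul hΓ), hνα Γ hΓ, hμ₀,
      lintegral_withDensity_eq_lintegral_mul _ hwmeas
        (measurable_measure_prodMk_left (hsmul hΓ))]
    refine setLIntegral_congr_fun measurableSet_Ioi (fun r _ => ?_)
    have : ∫⁻ θ, Γ.indicator (fun _ => (1:ℝ≥0∞)) (r • θ) ∂S
        = S (Prod.mk r ⁻¹' ((fun p : ℝ × EuclideanSpace ℝ (Fin d) => p.1 • p.2) ⁻¹' Γ)) := by
      rw [← lintegral_indicator_one (measurable_prodMk_left (hsmul hΓ))]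
      refine lintegral_congr fun θ => ?_
      by_cases h : r • θ ∈ Γ <;> simp [Set.indicator_of_mem, Set.indicator_of_notMem, h]
    rw [Pi.mul_apply, this, mul_comm]
  rw [hμeq, lintegral_map hf hsmul, lintegral_prod_symm (fun p : ℝ × EuclideanSpace ℝ (Fin d) => f (p.1 • p.2))
    (show AEMeasurable (fun p : ℝ × EuclideanSpace ℝ (Fin d) => f (p.1 • p.2)) _ from (hf.comp hsmul).aemeasurable)]
  refine lintegral_congr fun θ => ?_
  rw [hμ₀, lintegral_withDensity_eq_lintegral_mul _ hwmeas
    (show Measurable fun r : ℝ => f ((r, θ).1 • (r, θ).2) by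
      exact hf.comp (measurable_id.smul measurable_const))]
  refine lintegral_congr fun r => ?_
  rw [Pi.mul_apply, mul_comm]

end AuxStmt8

/-- Lemma 2.7: if `ν ≥ ν^{(α)}` where `ν^{(α)}` is the α-stable measure with spherical
measure `S` (given in polar form), and `σ` is an invertible matrix (a continuous linear
equivalence of `ℝ^d`), then for all `ξ`,
`∫ (1 − cos⟪ξ, σy⟫) ν(dy) ≥ c_α (inf_{|θ|=1}|σ*θ|^α)(inf_{|θ₀|=1}∫|⟪θ₀,θ⟫|^α S(dθ)) |ξ|^α`,
with `c_α = ∫₀^∞ (1−cos r) r^{-(1+α)} dr ∈ (0,∞)`. -/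
theorem stmt8 (d : ℕ) (α : ℝ) (hα : α ∈ Set.Ioo (0:ℝ) 2)
    (S : Measure (EuclideanSpace ℝ (Fin d))) [IsFiniteMeasure S]
    (hS : ∀ᵐ θ ∂S, ‖θ‖ = 1)
    (να ν : Measure (EuclideanSpace ℝ (Fin d)))
    (hνα : ∀ Γ : Set (EuclideanSpace ℝ (Fin d)), MeasurableSet Γ →
      να Γ = ∫⁻ r in Set.Ioi (0:ℝ),
        (∫⁻ θ, Γ.indicator (fun _ => (1:ℝ≥0∞)) (r • θ) ∂S) * ENNReal.ofReal (r ^ (-(1+α))))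
    (hle : να ≤ ν)
    (σ : EuclideanSpace ℝ (Fin d) ≃L[ℝ] EuclideanSpace ℝ (Fin d)) :
    IntegrableOn (fun r => (1 - Real.cos r) / r ^ (1 + α)) (Set.Ioi (0:ℝ)) ∧
    (0 < ∫ r in Set.Ioi (0:ℝ), (1 - Real.cos r) / r ^ (1 + α)) ∧
    ∀ ξ : EuclideanSpace ℝ (Fin d),
      ENNReal.ofReal ((∫ r in Set.Ioi (0:ℝ), (1 - Real.cos r) / r ^ (1 + α)) *
          ((⨅ θ : Metric.sphere (0 : EuclideanSpace ℝ (Fin d)) 1,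
              ‖ContinuousLinearMap.adjoint σ.toContinuousLinearMap θ‖ ^ α) *
            ((⨅ θ₀ : Metric.sphere (0 : EuclideanSpace ℝ (Fin d)) 1,
                ∫ θ, |⟪(θ₀ : EuclideanSpace ℝ (Fin d)), θ⟫| ^ α ∂S) * ‖ξ‖ ^ α)))
        ≤ ∫⁻ y, ENNReal.ofReal (1 - Real.cos ⟪ξ, σ y⟫) ∂ν := by
  refine ⟨lemA hα, lemB hα, fun ξ => ?_⟩
  obtain ⟨hα0, hα2⟩ := hα
  set cα := ∫ r in Set.Ioi (0:ℝ), (1 - Real.cos r) / r ^ (1 + α) with hcα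
  by_cases hξ : ξ = 0
  · simp [hξ, Real.zero_rpow (ne_of_gt hα0)]
  -- notation
  set T := ContinuousLinearMap.adjoint σ.toContinuousLinearMap with hT
  have hξn : ‖ξ‖ ≠ 0 := norm_ne_zero_iff.2 hξ
  set ξh : EuclideanSpace ℝ (Fin d) := ‖ξ‖⁻¹ • ξ with hξhdef
  have hξh : ‖ξh‖ = 1 := by
    rw [hξhdef, norm_smul, norm_inv, norm_norm, inv_mul_cancel₀ hξn]
  set η : EuclideanSpace ℝ (Fin d) := T ξ with hηdef
  have hTinv : ∀ x, ContinuousLinearMap.adjoint σ.symm.toContinuousLinearMap (T x) = x := by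
    intro x
    have h1 : σ.toContinuousLinearMap.comp σ.symm.toContinuousLinearMap
        = ContinuousLinearMap.id ℝ _ := by
      ext y; simp
    have h2 := congrArg ContinuousLinearMap.adjoint h1
    rw [ContinuousLinearMap.adjoint_comp, ContinuousLinearMap.adjoint_id] at h2
    simpa using DFunLike.congr_fun h2 x
  have hη : η ≠ 0 := by
    intro h
    apply hξ
    have := hTinv ξ
    rw [← hηdef, h] at this
    simpa using this.symm
  have hηn : ‖η‖ ≠ 0 := norm_ne_zero_iff.2 hη
  set ηh : EuclideanSpace ℝ (Fin d) := ‖η‖⁻¹ • η with hηhdef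
  have hηh : ‖ηh‖ = 1 := by
    rw [hηhdef, norm_smul, norm_inv, norm_norm, inv_mul_cancel₀ hηn]
  have hinner : ∀ y : EuclideanSpace ℝ (Fin d), ⟪ξ, σ y⟫ = ⟪η, y⟫ := by
    intro y
    rw [hηdef, hT, ContinuousLinearMap.adjoint_inner_left]
    rfl
  -- nonnegativity
  have hcα0 : 0 ≤ cα := (lemB ⟨hα0, hα2⟩).le
  have hA0 : (0:ℝ) ≤ ⨅ θ : Metric.sphere (0 : EuclideanSpace ℝ (Fin d)) 1, ‖T θ‖ ^ α :=
    Real.iInf_nonneg fun θ => Real.rpow_nonneg (norm_nonneg _) _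
  have hB0 : (0:ℝ) ≤ ⨅ θ₀ : Metric.sphere (0 : EuclideanSpace ℝ (Fin d)) 1,
      ∫ θ, |⟪(θ₀ : EuclideanSpace ℝ (Fin d)), θ⟫| ^ α ∂S :=
    Real.iInf_nonneg fun θ₀ => integral_nonneg fun θ => Real.rpow_nonneg (abs_nonneg _) _
  -- the integrand
  set g : EuclideanSpace ℝ (Fin d) → ℝ := fun θ => |⟪η, θ⟫| ^ α with hg
  have hgc : Continuous g := by
    rw [hg]
    exact ((continuous_abs.comp (continuous_const.inner continuous_id)).rpow_const
      (fun x => Or.inr hα0.le))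
  have hg0 : ∀ θ, 0 ≤ g θ := fun θ => Real.rpow_nonneg (abs_nonneg _) _
  have hgint : Integrable g S := by
    refine Integrable.mono' (integrable_const (‖η‖ ^ α)) hgc.aestronglyMeasurable ?_
    filter_upwards [hS] with θ hθ
    rw [Real.norm_eq_abs, abs_of_nonneg (hg0 θ)]
    refine Real.rpow_le_rpow (abs_nonneg _) ?_ hα0.le
    calc |⟪η, θ⟫| ≤ ‖η‖ * ‖θ‖ := abs_real_inner_le_norm η θ
      _ = ‖η‖ := by rw [hθ, mul_one]
  -- real estimates
  have hAle : (⨅ θ : Metric.sphere (0 : EuclideanSpace ℝ (Fin d)) 1, ‖T θ‖ ^ α) * ‖ξ‖ ^ α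
      ≤ ‖η‖ ^ α := by
    have h1 : (⨅ θ : Metric.sphere (0 : EuclideanSpace ℝ (Fin d)) 1, ‖T θ‖ ^ α)
        ≤ ‖T ξh‖ ^ α := by
      refine ciInf_le ⟨0, ?_⟩ (⟨ξh, mem_sphere_zero_iff_norm.2 hξh⟩ :
        Metric.sphere (0 : EuclideanSpace ℝ (Fin d)) 1)
      rintro x ⟨i, rfl⟩
      exact Real.rpow_nonneg (norm_nonneg _) _
    have h2 : ‖η‖ = ‖T ξh‖ * ‖ξ‖ := by
      have hxi : ξ = ‖ξ‖ • ξh := by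
        rw [hξhdef, smul_smul, mul_inv_cancel₀ hξn, one_smul]
      rw [hηdef]
      conv_lhs => rw [hxi]
      rw [T.map_smul, norm_smul, Real.norm_eq_abs, abs_of_nonneg (norm_nonneg ξ), mul_comm]
    calc _ ≤ ‖T ξh‖ ^ α * ‖ξ‖ ^ α :=
          mul_le_mul_of_nonneg_right h1 (Real.rpow_nonneg (norm_nonneg _) _)
      _ = ‖η‖ ^ α := by
          rw [h2, Real.mul_rpow (norm_nonneg _) (norm_nonneg _)]
  have hBle : (⨅ θ₀ : Metric.sphere (0 : EuclideanSpace ℝ (Fin d)) 1,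
      ∫ θ, |⟪(θ₀ : EuclideanSpace ℝ (Fin d)), θ⟫| ^ α ∂S) ≤ ∫ θ, |⟪ηh, θ⟫| ^ α ∂S := by
    refine ciInf_le ⟨0, ?_⟩ (⟨ηh, mem_sphere_zero_iff_norm.2 hηh⟩ :
      Metric.sphere (0 : EuclideanSpace ℝ (Fin d)) 1)
    rintro x ⟨i, rfl⟩
    exact integral_nonneg fun θ => Real.rpow_nonneg (abs_nonneg _) _
  have hsplit : ∫ θ, g θ ∂S = ‖η‖ ^ α * ∫ θ, |⟪ηh, θ⟫| ^ α ∂S := by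
    rw [← integral_const_mul]
    refine integral_congr_ae (Filter.Eventually.of_forall fun θ => ?_)
    have hδ : ⟪η, θ⟫ = ‖η‖ * ⟪ηh, θ⟫ := by
      conv_lhs => rw [show η = ‖η‖ • ηh by rw [hηhdef, smul_smul, mul_inv_cancel₀ hηn, one_smul]]
      rw [real_inner_smul_left]
    rw [hg]
    simp only
    rw [hδ, abs_mul, abs_of_nonneg (norm_nonneg η),
      Real.mul_rpow (norm_nonneg _) (abs_nonneg _)]
  have hreal : (⨅ θ : Metric.sphere (0 : EuclideanSpace ℝ (Fin d)) 1, ‖T θ‖ ^ α) *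
      ((⨅ θ₀ : Metric.sphere (0 : EuclideanSpace ℝ (Fin d)) 1,
        ∫ θ, |⟪(θ₀ : EuclideanSpace ℝ (Fin d)), θ⟫| ^ α ∂S) * ‖ξ‖ ^ α)
      ≤ ∫ θ, g θ ∂S := by
    rw [hsplit]
    have := mul_le_mul hAle hBle hB0 (Real.rpow_nonneg (norm_nonneg η) _)
    calc _ = ((⨅ θ : Metric.sphere (0 : EuclideanSpace ℝ (Fin d)) 1, ‖T θ‖ ^ α) * ‖ξ‖ ^ α) *
          (⨅ θ₀ : Metric.sphere (0 : EuclideanSpace ℝ (Fin d)) 1,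
            ∫ θ, |⟪(θ₀ : EuclideanSpace ℝ (Fin d)), θ⟫| ^ α ∂S) := by ring
      _ ≤ _ := this
  -- measurable target integrand
  have hfmeas : Measurable fun y : EuclideanSpace ℝ (Fin d) =>
      ENNReal.ofReal (1 - Real.cos ⟪ξ, σ y⟫) := by
    refine Measurable.ennreal_ofReal ?_
    exact (continuous_const.sub (Real.continuous_cos.comp
      (continuous_const.inner σ.continuous))).measurable
  -- main chain
  calc ENNReal.ofReal (cα * ((⨅ θ : Metric.sphere (0 : EuclideanSpace ℝ (Fin d)) 1, ‖T θ‖ ^ α) *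
        ((⨅ θ₀ : Metric.sphere (0 : EuclideanSpace ℝ (Fin d)) 1,
          ∫ θ, |⟪(θ₀ : EuclideanSpace ℝ (Fin d)), θ⟫| ^ α ∂S) * ‖ξ‖ ^ α)))
      ≤ ENNReal.ofReal (cα * ∫ θ, g θ ∂S) :=
        ENNReal.ofReal_le_ofReal (mul_le_mul_of_nonneg_left hreal hcα0)
    _ = ENNReal.ofReal cα * ENNReal.ofReal (∫ θ, g θ ∂S) := ENNReal.ofReal_mul hcα0
    _ = ENNReal.ofReal cα * ∫⁻ θ, ENNReal.ofReal (g θ) ∂S := by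
        rw [ofReal_integral_eq_lintegral_ofReal hgint (Filter.Eventually.of_forall hg0)]
    _ = ∫⁻ θ, ENNReal.ofReal cα * ENNReal.ofReal (g θ) ∂S :=
        (lintegral_const_mul _ hgc.measurable.ennreal_ofReal).symm
    _ = ∫⁻ θ, (∫⁻ r in Set.Ioi (0:ℝ),
          ENNReal.ofReal (1 - Real.cos (⟪η, θ⟫ * r)) * ENNReal.ofReal (r ^ (-(1+α)))) ∂S := by
        refine lintegral_congr fun θ => ?_
        rw [lemC ⟨hα0, hα2⟩ ⟪η, θ⟫]
    _ = ∫⁻ θ, (∫⁻ r in Set.Ioi (0:ℝ),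
          ENNReal.ofReal (1 - Real.cos ⟪ξ, σ (r • θ)⟫) * ENNReal.ofReal (r ^ (-(1+α)))) ∂S := by
        refine lintegral_congr fun θ => ?_
        refine setLIntegral_congr_fun measurableSet_Ioi
          (fun r _ => ?_)
        rw [hinner (r • θ), real_inner_smul_right, mul_comm r (⟪η, θ⟫)]
    _ = ∫⁻ y, ENNReal.ofReal (1 - Real.cos ⟪ξ, σ y⟫) ∂να :=
        (lemD S να hνα _ hfmeas).symm
    _ ≤ ∫⁻ y, ENNReal.ofReal (1 - Real.cos ⟪ξ, σ y⟫) ∂ν := lintegral_mono' hle le_rfl
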